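/- arXiv:2106.10917 — 3 statements merged into one kernel-verified Lean document; each statement's English description precedes it below -/
import Mathlib

section
/- For integers k_1,...,k_r ≥ 1, r ≥ 1, and n ≥ 0, the multi-Stirling numbers of the first kind satisfy S_1^{(k_1,...,k_r)}(n+r, r) = r! · binom(n+r, n) · Σ_{m=0}^{n} B_m^{(k_1,...,k_r)} · [n m], where [n m] is the unsigned Stirling number of the first kind and B_m^{(k_1,...,k_r)} are the multi-Bernoulli numbers. -/
open scoped Classical in
/-- The coefficient of `z^n` in the multiple logarithm
`Li_{k_1,...,k_r}(z) = Σ_{0<m_1<⋯<m_r} z^{m_r}/(m_1^{k_1}⋯m_r^{k_r})`, i.e.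
`Σ_{0<m_1<⋯<m_{r-1}<m_r=n} 1/(m_1^{k_1}⋯m_r^{k_r})` (integer indices allowed; for a strictly
increasing positive tuple, `m_r` is the supremum of its entries). -/
noncomputable def liCoeff (r : ℕ) (k : Fin r → ℤ) (n : ℕ) : ℚ :=
  ∑ m : Fin r → Fin (n + 1),
    if StrictMono m ∧ (∀ i, 0 < m i) ∧ (Finset.univ.sup fun i => (m i : ℕ)) = n then
      (∏ i, ((m i : ℕ) : ℚ) ^ (k i))⁻¹
    else 0

/-- Multi-Stirling numbers of the first kind:
`S_1^{(k_1,...,k_r)}(n,r) = n! ⬝ Σ_{0<m_1<⋯<m_{r-1}<n} 1/(m_1^{k_1}⋯m_{r-1}^{k_{r-1}} n^{k_r})`,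
so that `Li_{k_1,...,k_r}(t) = Σ_{n≥r} S_1^{(k_1,...,k_r)}(n,r) t^n/n!`. -/
noncomputable def multiStirling1 (r : ℕ) (k : Fin r → ℕ) (n : ℕ) : ℚ :=
  (n.factorial : ℚ) * liCoeff r (fun i => (k i : ℤ)) n

/-- The formal power series `1 - e^{-t} ∈ ℚ⟦t⟧`. -/
noncomputable def oneSubExpNeg : PowerSeries ℚ :=
  1 - PowerSeries.rescale (-1) (PowerSeries.exp ℚ)

/-- Multi-Bernoulli numbers, defined by the formal power series identity
`Σ_{n≥0} B_n^{(k_1,...,k_r)} t^n/n! = Li_{k_1,...,k_r}(1-e^{-t})/(1-e^{-t})^r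
  = Σ_{m≥r} (S_1^{(k_1,...,k_r)}(m,r)/m!) (1-e^{-t})^{m-r}` in `ℚ⟦t⟧`,
where `S_1^{(k_1,...,k_r)}(m,r)/m! = liCoeff r k m`. Since `(1-e^{-t})^j` has order `≥ j`,
the `n`-th coefficient of the series only involves the (finitely many) terms with
`j = m - r ≤ n`, so the infinite sum may be truncated exactly. -/
noncomputable def multiBernoulli (r : ℕ) (k : Fin r → ℕ) (n : ℕ) : ℚ :=
  (n.factorial : ℚ) *
    PowerSeries.coeff (R := ℚ) n
      (∑ j ∈ Finset.range (n + 1), liCoeff r (fun i => (k i : ℤ)) (j + r) • oneSubExpNeg ^ j)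


section Aux
open PowerSeries Finset

lemma E_pow (i : ℕ) :
    (rescale (-1:ℚ) (exp ℚ)) ^ i = rescale (-(i:ℚ)) (exp ℚ) := by
  rw [← map_pow, exp_pow_eq_rescale_exp, rescale_rescale,
    show ((i:ℚ) * -1) = -(i:ℚ) by ring]

lemma oneSubExpNeg_pow (j : ℕ) :
    oneSubExpNeg ^ j = ∑ i ∈ Finset.range (j+1),
      ((-1:ℚ)^i * (j.choose i : ℚ)) • rescale (-(i:ℚ)) (exp ℚ) := by
  rw [oneSubExpNeg,
    show (1 : ℚ⟦X⟧) - rescale (-1:ℚ) (exp ℚ) = -(rescale (-1:ℚ) (exp ℚ) - 1) by ring,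
    neg_pow, sub_pow, Finset.mul_sum]
  refine Finset.sum_congr rfl fun i hi => ?_
  rw [E_pow i, smul_eq_C_mul, map_mul, map_pow, map_neg, map_one, map_natCast]
  ring_nf
  rw [show j*2 = 2*j by ring, pow_mul]
  norm_num

lemma fact_mul_coeff (m j : ℕ) :
    (m.factorial : ℚ) * coeff m (oneSubExpNeg ^ j)
      = ∑ i ∈ Finset.range (j+1), (-1:ℚ)^i * (j.choose i : ℚ) * (-(i:ℚ))^m := by
  rw [oneSubExpNeg_pow, map_sum, Finset.mul_sum]
  refine Finset.sum_congr rfl fun i hi => ?_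
  rw [coeff_smul, coeff_rescale, coeff_exp, smul_eq_mul]
  have hm : (m.factorial : ℚ) ≠ 0 := Nat.cast_ne_zero.mpr m.factorial_ne_zero
  simp only [Algebra.algebraMap_self, RingHom.id_apply]
  field_simp

lemma coeff_pow_eq_zero {m j : ℕ} (h : m < j) : coeff m (oneSubExpNeg ^ j) = 0 := by
  have hX : (X : ℚ⟦X⟧) ∣ oneSubExpNeg := by
    rw [X_dvd_iff, oneSubExpNeg, map_sub, map_one,
      ← coeff_zero_eq_constantCoeff_apply, coeff_rescale, coeff_exp]
    simp
  exact X_pow_dvd_iff.mp (pow_dvd_pow_of_dvd hX j) m h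

lemma alt_sum (n : ℕ) :
    ∑ i ∈ Finset.range (n+1), (-1:ℚ)^i * (n.choose i : ℚ) = if n = 0 then 1 else 0 := by
  have h2 := congrArg (fun z : ℤ => (z : ℚ)) (Int.alternating_sum_range_choose (n := n))
  push_cast at h2
  simpa [apply_ite] using h2

lemma asc_eval_neg (n i : ℕ) :
    (ascPochhammer ℚ n).eval (-(i:ℚ)) = (-1:ℚ)^n * (n.factorial : ℚ) * (i.choose n : ℚ) := by
  rw [ascPochhammer_eval_neg_eq_descPochhammer, descPochhammer_eval_eq_descFactorial,
    Nat.descFactorial_eq_factorial_mul_choose]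
  push_cast
  ring

lemma key_sum (n j : ℕ) :
    ∑ i ∈ Finset.range (j+1), (-1:ℚ)^i * (j.choose i : ℚ) * (i.choose n : ℚ)
      = (-1:ℚ)^n * (if n = j then 1 else 0) := by
  rcases lt_or_ge j n with h | h
  · rw [if_neg (by omega), mul_zero]
    refine Finset.sum_eq_zero fun i hi => ?_
    simp only [Finset.mem_range] at hi
    have h0 : i.choose n = 0 := Nat.choose_eq_zero_of_lt (by omega)
    rw [h0, Nat.cast_zero, mul_zero]
  · have step : ∀ i ∈ Finset.range (j+1),
        (-1:ℚ)^i * (j.choose i : ℚ) * (i.choose n : ℚ)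
        = if n ≤ i then (j.choose n : ℚ) * ((-1:ℚ)^i * (((j-n).choose (i-n) : ℕ) : ℚ)) else 0 := by
      intro i hi
      simp only [Finset.mem_range] at hi
      rcases lt_or_ge i n with h2 | h2
      · rw [if_neg (by omega), Nat.choose_eq_zero_of_lt h2, Nat.cast_zero, mul_zero]
      · rw [if_pos h2]
        have hcm : ((j.choose i : ℚ)) * (i.choose n : ℚ)
            = ((j.choose n : ℚ)) * (((j-n).choose (i-n) : ℕ) : ℚ) := by
          exact_mod_cast congrArg (Nat.cast (R := ℚ))
            (Nat.choose_mul (n := j) h2)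
        calc (-1:ℚ)^i * (j.choose i : ℚ) * (i.choose n : ℚ)
            = (-1:ℚ)^i * ((j.choose i : ℚ) * (i.choose n : ℚ)) := by ring
          _ = (-1:ℚ)^i * ((j.choose n : ℚ) * (((j-n).choose (i-n) : ℕ) : ℚ)) := by rw [hcm]
          _ = (j.choose n : ℚ) * ((-1:ℚ)^i * (((j-n).choose (i-n) : ℕ) : ℚ)) := by ring
    rw [Finset.sum_congr rfl step]
    have hsub : Finset.Ico n (j+1) ⊆ Finset.range (j+1) := by
      intro x hx; simp only [Finset.mem_Ico] at hx; simp [hx.2]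
    rw [← Finset.sum_subset hsub (by
      intro x hx hx2
      simp only [Finset.mem_range] at hx
      simp only [Finset.mem_Ico, not_and, not_lt] at hx2
      rw [if_neg (by omega)])]
    rw [Finset.sum_congr rfl (fun x hx => by
      simp only [Finset.mem_Ico] at hx; rw [if_pos hx.1])]
    rw [Finset.sum_Ico_eq_sum_range]
    have hjn : j + 1 - n = (j - n) + 1 := by omega
    rw [hjn]
    have : ∀ l ∈ Finset.range ((j-n)+1),
        (j.choose n : ℚ) * ((-1:ℚ)^(n+l) * (((j-n).choose (n+l-n) : ℕ) : ℚ))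
        = ((j.choose n : ℚ) * (-1:ℚ)^n) * ((-1:ℚ)^l * (((j-n).choose l : ℕ) : ℚ)) := by
      intro l hl
      rw [show n + l - n = l by omega, pow_add]
      ring
    rw [Finset.sum_congr rfl this, ← Finset.mul_sum, alt_sum (j-n)]
    rcases eq_or_ne n j with rfl | hne
    · simp
    · rw [if_neg (show ¬(j - n = 0) by omega), if_neg hne]
      ring
lemma asc_coeff_cast (n m : ℕ) :
    ((ascPochhammer ℕ n).coeff m : ℚ) = (ascPochhammer ℚ n).coeff m := by
  rw [← ascPochhammer_map (Nat.castRingHom ℚ) n, Polynomial.coeff_map]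
  simp

lemma asc_eval_sum (n : ℕ) (x : ℚ) :
    ∑ m ∈ Finset.range (n+1), ((ascPochhammer ℕ n).coeff m : ℚ) * x^m
      = (ascPochhammer ℚ n).eval x := by
  rw [Polynomial.eval_eq_sum_range' (n := n+1) (by rw [ascPochhammer_natDegree]; omega)]
  exact Finset.sum_congr rfl fun m _ => by rw [asc_coeff_cast]

lemma stirling_sum (n j : ℕ) :
    ∑ m ∈ Finset.range (n+1), ((ascPochhammer ℕ n).coeff m : ℚ) *
        ((m.factorial : ℚ) * coeff m (oneSubExpNeg ^ j))
      = (n.factorial : ℚ) * (if n = j then 1 else 0) := by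
  calc ∑ m ∈ Finset.range (n+1), ((ascPochhammer ℕ n).coeff m : ℚ) *
        ((m.factorial : ℚ) * coeff m (oneSubExpNeg ^ j))
      = ∑ m ∈ Finset.range (n+1), ∑ i ∈ Finset.range (j+1),
          ((-1:ℚ)^i * (j.choose i : ℚ)) *
            (((ascPochhammer ℕ n).coeff m : ℚ) * (-(i:ℚ))^m) := by
        refine Finset.sum_congr rfl fun m _ => ?_
        rw [fact_mul_coeff, Finset.mul_sum]
        exact Finset.sum_congr rfl fun i _ => by ring
    _ = ∑ i ∈ Finset.range (j+1), ((-1:ℚ)^i * (j.choose i : ℚ)) *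
          ∑ m ∈ Finset.range (n+1), ((ascPochhammer ℕ n).coeff m : ℚ) * (-(i:ℚ))^m := by
        rw [Finset.sum_comm]
        exact Finset.sum_congr rfl fun i _ => by rw [Finset.mul_sum]
    _ = ∑ i ∈ Finset.range (j+1), ((-1:ℚ)^n * (n.factorial : ℚ)) *
          ((-1:ℚ)^i * (j.choose i : ℚ) * (i.choose n : ℚ)) := by
        refine Finset.sum_congr rfl fun i _ => ?_
        rw [asc_eval_sum, asc_eval_neg]
        ring
    _ = (n.factorial : ℚ) * (if n = j then 1 else 0) := by
        rw [← Finset.mul_sum, key_sum]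
        rcases eq_or_ne n j with rfl | hne
        · have h1 : (-1:ℚ)^n * (-1)^n = 1 := by
            rw [← pow_add, show n+n=2*n by ring, pow_mul]; norm_num
          simp only [if_pos rfl, if_true, mul_one]
          linear_combination (n.factorial : ℚ) * h1
        · simp [if_neg hne]

end Aux

/-- For integers `k_1,...,k_r ≥ 1`, `r ≥ 1` and `n ≥ 0`, the multi-Stirling numbers of the
first kind satisfy `S_1^{(k_1,...,k_r)}(n+r,r) = r! ⬝ C(n+r,n) ⬝ Σ_{m=0}^{n} B_m^{(k_1,...,k_r)}
⬝ [n m]`, where `[n m]` is the unsigned Stirling number of the first kind, i.e. the coefficient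
of `x^m` in the rising factorial `⟨x⟩_n = x(x+1)⋯(x+n-1)`. -/
theorem multiStirling1_eq_sum_multiBernoulli (r : ℕ) (hr : 1 ≤ r) (k : Fin r → ℕ)
    (hk : ∀ i, 1 ≤ k i) (n : ℕ) :
    multiStirling1 r k (n + r) =
      (r.factorial : ℚ) * ((n + r).choose n : ℚ) *
        ∑ m ∈ Finset.range (n + 1),
          multiBernoulli r k m * ((ascPochhammer ℕ n).coeff m : ℚ) := by
  classical
  set a : ℕ → ℚ := fun j => liCoeff r (fun i => (k i : ℤ)) (j + r) with ha
  have hB : ∀ m, m ≤ n → multiBernoulli r k m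
      = ∑ j ∈ Finset.range (n+1),
          a j * ((m.factorial : ℚ) * PowerSeries.coeff m (oneSubExpNeg ^ j)) := by
    intro m hm
    rw [multiBernoulli, map_sum, Finset.mul_sum]
    rw [Finset.sum_subset (Finset.range_subset_range.mpr (by omega) :
        Finset.range (m+1) ⊆ Finset.range (n+1)) (by
      intro j hj hj2
      simp only [Finset.mem_range, not_lt] at hj2
      rw [PowerSeries.coeff_smul, coeff_pow_eq_zero (by omega), smul_zero, mul_zero])]
    refine Finset.sum_congr rfl fun j hj => ?_
    rw [PowerSeries.coeff_smul, smul_eq_mul]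
    ring
  have hRHS : ∑ m ∈ Finset.range (n+1),
      multiBernoulli r k m * ((ascPochhammer ℕ n).coeff m : ℚ)
      = (n.factorial : ℚ) * a n := by
    calc ∑ m ∈ Finset.range (n+1),
          multiBernoulli r k m * ((ascPochhammer ℕ n).coeff m : ℚ)
        = ∑ m ∈ Finset.range (n+1), ∑ j ∈ Finset.range (n+1),
            a j * (((ascPochhammer ℕ n).coeff m : ℚ) *
              ((m.factorial : ℚ) * PowerSeries.coeff m (oneSubExpNeg ^ j))) := by
          refine Finset.sum_congr rfl fun m hm => ?_
          simp only [Finset.mem_range] at hm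
          rw [hB m (by omega), Finset.sum_mul]
          exact Finset.sum_congr rfl fun j _ => by ring
      _ = ∑ j ∈ Finset.range (n+1), a j *
            ∑ m ∈ Finset.range (n+1), ((ascPochhammer ℕ n).coeff m : ℚ) *
              ((m.factorial : ℚ) * PowerSeries.coeff m (oneSubExpNeg ^ j)) := by
          rw [Finset.sum_comm]
          exact Finset.sum_congr rfl fun j _ => by rw [Finset.mul_sum]
      _ = ∑ j ∈ Finset.range (n+1), a j * ((n.factorial : ℚ) * (if n = j then 1 else 0)) := by
          exact Finset.sum_congr rfl fun j _ => by rw [stirling_sum]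
      _ = (n.factorial : ℚ) * a n := by
          rw [Finset.sum_eq_single n (fun j _ hj => by
              rw [if_neg (fun hc => hj hc.symm), mul_zero, mul_zero])
            (fun hc => absurd (Finset.self_mem_range_succ n) hc)]
          rw [if_pos rfl, mul_one, mul_comm]
  rw [hRHS, multiStirling1]
  have hsymm : (n + r).choose r = (n + r).choose n := by
    have h := Nat.choose_symm (Nat.le_add_right n r)
    rwa [Nat.add_sub_cancel_left] at h
  have hfac : ((n+r).factorial : ℚ)
      = ((n + r).choose n : ℚ) * (n.factorial : ℚ) * (r.factorial : ℚ) := by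
    rw [← hsymm]
    exact_mod_cast congrArg (Nat.cast (R := ℚ))
      (Nat.add_choose_mul_factorial_mul_factorial n r).symm
  rw [hfac]
  show _ * a n = _
  ring
end

section
/- For all integers n ≥ r ≥ 1, the multi-Lah number with all indices equal to 1 equals the unsigned Lah number: L^{(1,1,...,1)}(n,r) = L(n,r) = binom(n−1, r−1) · n!/r!, where there are r indices equal to 1. -/
/-- Multi-Lah numbers, defined by the formal power series identity
`Σ_{n≥r} L^{(k_1,...,k_r)}(n,r) t^n/n! = Li_{k_1,...,k_r}(1-e^{-t})/(1-t)^r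
  = (1-t)^{-r} ⬝ Σ_{m} liCoeff(m) (1-e^{-t})^m` in `ℚ⟦t⟧` (integer indices allowed).
Since `(1-e^{-t})^m` has order `≥ m`, the `n`-th coefficient of the series only involves the
(finitely many) terms with `m ≤ n`, so the infinite sum may be truncated exactly. -/
noncomputable def multiLah (r : ℕ) (k : Fin r → ℤ) (n : ℕ) : ℚ :=
  (n.factorial : ℚ) *
    PowerSeries.coeff (R := ℚ) n
      (((1 - PowerSeries.X : PowerSeries ℚ) ^ r)⁻¹ *
        ∑ m ∈ Finset.range (n + 1), liCoeff r k m • oneSubExpNeg ^ m)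

section Aux
set_option maxHeartbeats 1000000


def stirS : ℕ → ℕ → ℕ
  | 0, 0 => 1
  | 0, _+1 => 0
  | _+1, 0 => 0
  | n+1, k+1 => (k+1) * stirS n (k+1) + stirS n k

def stirU : ℕ → ℕ → ℕ
  | 0, 0 => 1
  | 0, _+1 => 0
  | _+1, 0 => 0
  | n+1, k+1 => n * stirU n (k+1) + stirU n k

@[simp] lemma stirS_zero_zero : stirS 0 0 = 1 := rfl
@[simp] lemma stirS_zero_succ (k : ℕ) : stirS 0 (k+1) = 0 := rfl
@[simp] lemma stirS_succ_zero (n : ℕ) : stirS (n+1) 0 = 0 := rfl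
lemma stirS_succ_succ (n k : ℕ) : stirS (n+1) (k+1) = (k+1) * stirS n (k+1) + stirS n k := rfl
@[simp] lemma stirU_zero_zero : stirU 0 0 = 1 := rfl
@[simp] lemma stirU_zero_succ (k : ℕ) : stirU 0 (k+1) = 0 := rfl
@[simp] lemma stirU_succ_zero (n : ℕ) : stirU (n+1) 0 = 0 := rfl
lemma stirU_succ_succ (n k : ℕ) : stirU (n+1) (k+1) = n * stirU n (k+1) + stirU n k := rfl

lemma stirS_zero_iff (n : ℕ) : stirS n 0 = if n = 0 then 1 else 0 := by cases n <;> simp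
lemma stirU_zero_right (n : ℕ) : stirU n 0 = if n = 0 then 1 else 0 := by cases n <;> simp

lemma stirS_eq_zero_of_lt : ∀ {n k : ℕ}, n < k → stirS n k = 0
  | 0, _+1, _ => rfl
  | n+1, k+1, h => by
      rw [stirS_succ_succ, stirS_eq_zero_of_lt (by omega), stirS_eq_zero_of_lt (by omega)]
      simp

lemma stirU_eq_zero_of_lt : ∀ {n k : ℕ}, n < k → stirU n k = 0
  | 0, _+1, _ => rfl
  | n+1, k+1, h => by
      rw [stirU_succ_succ, stirU_eq_zero_of_lt (by omega), stirU_eq_zero_of_lt (by omega)]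
      simp

lemma stirS_self : ∀ n : ℕ, stirS n n = 1
  | 0 => rfl
  | n+1 => by rw [stirS_succ_succ, stirS_eq_zero_of_lt (by omega), stirS_self n]; ring

/-- Stirling inversion. -/
lemma stir_inversion (j r : ℕ) :
    ∑ m ∈ Finset.range (j+1), (-1:ℚ)^(j+m) * (stirS j m) * (stirU m r) =
      if j = r then 1 else 0 := by
  induction j generalizing r with
  | zero =>
    rw [Finset.sum_range_one]
    rcases r with _ | r <;> simp
  | succ j ih =>
    rw [Finset.sum_range_succ' _ (j+1)]
    rw [show (-1:ℚ)^(j+1+0) * (stirS (j+1) 0) * (stirU 0 r) = 0 by simp, add_zero]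
    rcases r with _ | r
    · rw [show (if j+1 = 0 then (1:ℚ) else 0) = 0 by simp]
      apply Finset.sum_eq_zero
      intro m hm
      simp
    · set f : ℕ → ℚ := fun m => (-1:ℚ)^(j+m) * m * stirS j m * stirU m (r+1) with hf
      have key : ∀ m ∈ Finset.range (j+1),
          (-1:ℚ)^(j+1+(m+1)) * (stirS (j+1) (m+1)) * (stirU (m+1) (r+1)) =
            (f m - f (m+1)) + (-1:ℚ)^(j+m) * (stirS j m) * (stirU m r) := by
        intro m hm
        simp only [hf]
        rw [stirS_succ_succ, stirU_succ_succ]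
        push_cast
        ring_nf
      rw [Finset.sum_congr rfl key, Finset.sum_add_distrib, Finset.sum_range_sub']
      rw [ih r]
      have e1 : f 0 = 0 := by simp [hf]
      have e2 : f (j+1) = 0 := by
        simp only [hf]; rw [stirS_eq_zero_of_lt (by omega)]; simp
      rw [e1, e2]
      simp [Nat.succ_inj]

open PowerSeries

lemma coeff_oneSubExpNeg (j : ℕ) :
    coeff (R := ℚ) j oneSubExpNeg = if j = 0 then 0 else -((-1:ℚ)^j / j.factorial) := by
  rw [oneSubExpNeg, map_sub, coeff_rescale, coeff_exp]
  rcases j with _ | j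
  · simp
  · simp [coeff_one]
    ring

lemma constantCoeff_oneSubExpNeg : constantCoeff (R := ℚ) oneSubExpNeg = 0 := by
  rw [← coeff_zero_eq_constantCoeff, coeff_oneSubExpNeg]; simp

lemma derivative_oneSubExpNeg :
    d⁄dX ℚ oneSubExpNeg = 1 - oneSubExpNeg := by
  ext n
  rw [coeff_derivative, map_sub, coeff_oneSubExpNeg, coeff_oneSubExpNeg, coeff_one]
  rcases n with _ | n
  · simp [Nat.factorial]
  · have h1 : ((n:ℚ)+1+1) ≠ 0 := by positivity
    have h2 : ((n+1).factorial : ℚ) ≠ 0 := by positivity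
    simp only [Nat.succ_ne_zero, if_false, Nat.factorial_succ (n+1)]
    push_cast
    field_simp
    ring
  
lemma coeff_oneSubExpNeg_pow (j m : ℕ) :
    coeff (R := ℚ) j (oneSubExpNeg ^ m) =
      (-1:ℚ)^(m+j) * m.factorial * stirS j m / j.factorial := by
  induction j generalizing m with
  | zero =>
    rw [coeff_zero_eq_constantCoeff, map_pow, constantCoeff_oneSubExpNeg]
    rcases m with _ | m
    · simp [stirS_zero_iff]
    · rw [stirS_zero_succ]; simp
  | succ j ih =>
    have hD : d⁄dX ℚ (oneSubExpNeg ^ m) =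
        (m:ℚ⟦X⟧) * (oneSubExpNeg ^ (m-1) * (1 - oneSubExpNeg)) := by
      rw [Derivation.leibniz_pow, derivative_oneSubExpNeg]
      rw [nsmul_eq_mul, smul_eq_mul]
    have hc := congrArg (coeff (R := ℚ) j) hD
    rw [coeff_derivative] at hc
    rcases m with _ | m
    · rw [pow_zero] at hc ⊢
      rw [coeff_one] at hc
      simp only [Nat.succ_ne_zero, if_false] at hc
      have h1 : ((j:ℚ)+1) ≠ 0 := by positivity
      have : coeff (R := ℚ) (j+1) (1:ℚ⟦X⟧) = 0 := by
        rw [coeff_one]; simp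
      rw [this]
      rw [stirS_zero_iff]
      simp
    · rw [Nat.add_sub_cancel] at hc
      have hcast : ((m+1 : ℕ) : ℚ⟦X⟧) = C (R := ℚ) ((m:ℚ)+1) := by
        rw [map_add, map_natCast, map_one]; push_cast; ring
      rw [hcast, coeff_C_mul, mul_sub, mul_one, ← pow_succ, map_sub] at hc
      -- hc : coeff (j+1) (g^(m+1)) * (j+1) = (m+1) * (coeff j (g^m) - coeff j (g^(m+1)))
      have hj : ((j:ℚ)+1) ≠ 0 := by positivity
      apply mul_right_cancel₀ hj
      rw [hc, ih m, ih (m+1), stirS_succ_succ]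
      have hjf : ((j.factorial : ℚ)) ≠ 0 := by positivity
      have hjf1 : (((j+1).factorial : ℚ)) ≠ 0 := by positivity
      rw [Nat.factorial_succ (j), Nat.factorial_succ (m)]
      push_cast
      field_simp
      ring

open Finset

lemma strictMono_snoc_iff {r n : ℕ} (q : Fin r → Fin (n+1)) (a : Fin (n+1)) :
    StrictMono (Fin.snoc q a : Fin (r+1) → Fin (n+1)) ↔ StrictMono q ∧ ∀ i, q i < a := by
  constructor
  · intro h
    refine ⟨fun i j hij => ?_, fun i => ?_⟩
    · have := h (show Fin.castSucc i < Fin.castSucc j by exact Fin.castSucc_lt_castSucc_iff.mpr hij)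
      simpa using this
    · have := h (Fin.castSucc_lt_last i)
      simpa using this
  · rintro ⟨hq, ha⟩ i j hij
    rcases Fin.eq_castSucc_or_eq_last j with ⟨j', rfl⟩ | rfl
    · have hi : i ≠ Fin.last r := by
        intro h; rw [h] at hij
        exact absurd hij (not_lt.mpr (Fin.le_last _))
      obtain ⟨i', rfl⟩ := (Fin.eq_castSucc_or_eq_last i).resolve_right hi
      rw [Fin.snoc_castSucc, Fin.snoc_castSucc]
      exact hq (Fin.castSucc_lt_castSucc_iff.mp hij)
    · have hi : i ≠ Fin.last r := ne_of_lt hij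
      obtain ⟨i', rfl⟩ := (Fin.eq_castSucc_or_eq_last i).resolve_right hi
      rw [Fin.snoc_castSucc, Fin.snoc_last]
      exact ha i'

lemma sup_snoc {r n : ℕ} (q : Fin r → Fin (n+1)) (a : Fin (n+1))
    (ha : ∀ i, q i < a) :
    (Finset.univ.sup fun i => ((Fin.snoc q a : Fin (r+1) → Fin (n+1)) i : ℕ)) = a := by
  apply le_antisymm
  · apply Finset.sup_le
    intro i _
    rcases Fin.eq_castSucc_or_eq_last i with ⟨j, rfl⟩ | rfl
    · rw [Fin.snoc_castSucc]
      exact le_of_lt (ha j)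
    · rw [Fin.snoc_last]
  · have := Finset.le_sup (f := fun i => ((Fin.snoc q a : Fin (r+1) → Fin (n+1)) i : ℕ))
      (Finset.mem_univ (Fin.last r))
    simpa using this

open scoped Classical in
lemma liCoeff_succ (r n : ℕ) (hn : n ≠ 0) :
    liCoeff (r+1) (fun _ => (1:ℤ)) n =
      (n:ℚ)⁻¹ * ∑ s ∈ Finset.range n, liCoeff r (fun _ => (1:ℤ)) s := by
  have hn0 : 0 < n := Nat.pos_of_ne_zero hn
  rw [liCoeff]
  rw [← (Fin.snocEquiv (fun _ => Fin (n+1))).sum_comp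
      (fun m => if StrictMono m ∧ (∀ i, 0 < m i) ∧ (Finset.univ.sup fun i => (m i : ℕ)) = n then
        (∏ i, ((m i : ℕ) : ℚ) ^ ((1:ℤ)))⁻¹ else 0)]
  rw [Fintype.sum_prod_type]
  -- summand over (a, q), function is snoc q a
  have cond_iff : ∀ (a : Fin (n+1)) (q : Fin r → Fin (n+1)),
      (StrictMono (Fin.snoc q a : Fin (r+1) → Fin (n+1)) ∧
        (∀ i, 0 < (Fin.snoc q a : Fin (r+1) → Fin (n+1)) i) ∧
        (Finset.univ.sup fun i => ((Fin.snoc q a : Fin (r+1) → Fin (n+1)) i : ℕ)) = n) ↔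
      (a = Fin.last n ∧ (StrictMono q ∧ (∀ i, 0 < q i) ∧ ∀ i, (q i : ℕ) < n)) := by
    intro a q
    constructor
    · rintro ⟨h1, h2, h3⟩
      obtain ⟨hq, hlt⟩ := (strictMono_snoc_iff q a).mp h1
      have hsup := sup_snoc q a hlt
      have hav : (a : ℕ) = n := by rw [hsup] at h3; exact h3
      refine ⟨Fin.ext (by simpa using hav), hq, fun i => ?_, fun i => ?_⟩
      · have := h2 (Fin.castSucc i); simpa using this
      · have := hlt i; rw [Fin.lt_def] at this; omega
    · rintro ⟨rfl, hq, hpos, hlt⟩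
      have hlt' : ∀ i, q i < Fin.last n := fun i => by
        rw [Fin.lt_def]; simpa using hlt i
      refine ⟨(strictMono_snoc_iff q _).mpr ⟨hq, hlt'⟩, fun i => ?_, ?_⟩
      · rcases Fin.eq_castSucc_or_eq_last i with ⟨j, rfl⟩ | rfl
        · rw [Fin.snoc_castSucc]; exact hpos j
        · rw [Fin.snoc_last]
          rw [Fin.lt_def]
          simpa using hn0
      · rw [sup_snoc q _ hlt']
        simp
  have step1 : ∀ (a : Fin (n+1)) (q : Fin r → Fin (n+1)),
      (if StrictMono (Fin.snoc q a : Fin (r+1) → Fin (n+1)) ∧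
          (∀ i, 0 < (Fin.snoc q a : Fin (r+1) → Fin (n+1)) i) ∧
          (Finset.univ.sup fun i => ((Fin.snoc q a : Fin (r+1) → Fin (n+1)) i : ℕ)) = n then
        (∏ i, (((Fin.snoc q a : Fin (r+1) → Fin (n+1)) i : ℕ) : ℚ) ^ ((1:ℤ)))⁻¹ else 0) =
      if a = Fin.last n then
        (if StrictMono q ∧ (∀ i, 0 < q i) ∧ ∀ i, (q i : ℕ) < n then
          ((n:ℚ) * ∏ i, ((q i : ℕ) : ℚ))⁻¹ else 0)
      else 0 := by
    intro a q
    rw [if_congr (cond_iff a q) rfl rfl]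
    by_cases h : a = Fin.last n ∧ (StrictMono q ∧ (∀ i, 0 < q i) ∧ ∀ i, (q i : ℕ) < n)
    · rw [if_pos h, if_pos h.1, if_pos h.2]
      congr 1
      simp only [zpow_one]
      rw [Fin.prod_univ_castSucc]
      simp [Fin.snoc_castSucc, Fin.snoc_last, h.1, mul_comm]
    · rw [if_neg h]
      by_cases h1 : a = Fin.last n
      · rw [if_pos h1, if_neg (fun h2 => h ⟨h1, h2⟩)]
      · rw [if_neg h1]
  have hsnoc : ⇑(Fin.snocEquiv (fun _ => Fin (n+1))) =
      fun p : Fin (n+1) × (Fin r → Fin (n+1)) => (Fin.snoc p.2 p.1 : Fin (r+1) → Fin (n+1)) := rfl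
  simp only [hsnoc]
  rw [Finset.sum_congr rfl (fun a _ => Finset.sum_congr rfl (fun q _ => step1 a q))]
  rw [Finset.sum_comm]
  rw [Finset.sum_congr rfl (fun (q : Fin r → Fin (n+1)) _ => Finset.sum_ite_eq' Finset.univ (Fin.last n)
    (fun _ => if StrictMono q ∧ (∀ i, 0 < q i) ∧ ∀ i, ((q i : ℕ) < n) then
      ((n:ℚ) * ∏ i, ((q i : ℕ) : ℚ))⁻¹ else 0))]
  simp only [Finset.mem_univ, if_true]
  rw [Finset.mul_sum]
  rw [Finset.sum_congr rfl (fun (q : Fin r → Fin (n+1)) _ => show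
    (if StrictMono q ∧ (∀ i, 0 < q i) ∧ ∀ i, ((q i : ℕ) < n) then
      ((n:ℚ) * ∏ i, ((q i : ℕ) : ℚ))⁻¹ else 0) =
    (n:ℚ)⁻¹ * (if StrictMono q ∧ (∀ i, 0 < q i) ∧ ∀ i, ((q i : ℕ) < n) then
      (∏ i, ((q i : ℕ) : ℚ))⁻¹ else 0) by split <;> simp [mul_inv, mul_comm])]
  rw [← Finset.mul_sum, ← Finset.mul_sum]
  congr 1
  -- now the bijection
  have hL : ∀ s : ℕ, liCoeff r (fun _ => (1:ℤ)) s =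
      ∑ p ∈ Finset.univ.filter (fun p : Fin r → Fin (s+1) =>
          StrictMono p ∧ (∀ i, 0 < p i) ∧ (Finset.univ.sup fun i => (p i : ℕ)) = s),
        (∏ i, ((p i : ℕ) : ℚ))⁻¹ := by
    intro s
    rw [liCoeff, Finset.sum_filter]
    exact Finset.sum_congr rfl fun p _ => by split <;> simp
  rw [Finset.sum_congr rfl (fun s _ => hL s), ← Finset.sum_filter, Finset.sum_sigma']
  refine (Finset.sum_bij (fun (x : Σ s : ℕ, Fin r → Fin (s+1)) hx => fun j => Fin.castLE
      (Nat.succ_le_succ (le_of_lt (Finset.mem_range.mp (Finset.mem_sigma.mp hx).1)))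
      (x.2 j)) ?_ ?_ ?_ ?_).symm
  · rintro ⟨s, p⟩ hx
    obtain ⟨hs, hp⟩ := Finset.mem_sigma.mp hx
    rw [Finset.mem_filter] at hp
    dsimp only at hp
    obtain ⟨-, hmono, hpos, hsup⟩ := hp
    rw [Finset.mem_range] at hs
    dsimp only at hs
    rw [Finset.mem_filter]
    refine ⟨Finset.mem_univ _, (Fin.strictMono_castLE _).comp hmono, fun i => ?_, fun i => ?_⟩
    · have := hpos i
      rw [Fin.lt_def] at this ⊢
      simpa using this
    · have h1 : (p i : ℕ) ≤ s := by
        have := Finset.le_sup (f := fun i => ((p i : ℕ))) (Finset.mem_univ i)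
        rw [hsup] at this
        exact this
      simp only [Fin.coe_castLE]
      omega
  · rintro ⟨s, p⟩ hx ⟨s', p'⟩ hx' he
    obtain ⟨hs, hp⟩ := Finset.mem_sigma.mp hx
    obtain ⟨hs', hp'⟩ := Finset.mem_sigma.mp hx'
    rw [Finset.mem_filter] at hp hp'
    dsimp only at hp hp'
    have hvals : ∀ j, (p j : ℕ) = (p' j : ℕ) := fun j => by
      have := congrFun he j
      have := congrArg Fin.val this
      simpa using this
    have hss : s = s' := by
      rw [← hp.2.2.2, ← hp'.2.2.2]
      exact Finset.sup_congr rfl (fun j _ => hvals j)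
    subst hss
    have : p = p' := funext fun j => Fin.ext (hvals j)
    rw [this]
  · intro q hq
    rw [Finset.mem_filter] at hq
    obtain ⟨-, hmono, hpos, hlt⟩ := hq
    set s := Finset.univ.sup (fun i => (q i : ℕ)) with hs
    have hsn : s < n := by
      rw [hs]
      exact Finset.sup_lt_iff hn0 |>.mpr (fun i _ => hlt i)
    have hle : ∀ j, (q j : ℕ) < s + 1 := fun j =>
      Nat.lt_succ_of_le (Finset.le_sup (f := fun i => ((q i : ℕ))) (Finset.mem_univ j))
    refine ⟨⟨s, fun j => ⟨(q j : ℕ), hle j⟩⟩, ?_, ?_⟩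
    · rw [Finset.mem_sigma]
      refine ⟨Finset.mem_range.mpr hsn, ?_⟩
      rw [Finset.mem_filter]
      refine ⟨Finset.mem_univ _, fun i j hij => ?_, fun i => ?_, ?_⟩
      · rw [Fin.lt_def]
        exact hmono hij
      · rw [Fin.lt_def]
        exact hpos i
      · rfl
    · funext j
      exact Fin.ext rfl
  · rintro ⟨s, p⟩ hx
    simp [Fin.coe_castLE]


open scoped Classical in
lemma liCoeff_zero_left (k : Fin 0 → ℤ) (n : ℕ) :
    liCoeff 0 k n = if n = 0 then 1 else 0 := by
  rw [liCoeff, Fintype.sum_unique]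
  have hmono : ∀ f : Fin 0 → Fin (n+1), StrictMono f := fun f a => a.elim0
  have hpos : ∀ (f : Fin 0 → Fin (n+1)) (i : Fin 0), 0 < f i := fun f i => i.elim0
  by_cases hn : n = 0
  · subst hn
    rw [if_pos ⟨hmono _, hpos _, by simp⟩, if_pos rfl]
    simp
  · rw [if_neg, if_neg hn]
    rintro ⟨-, -, hsup⟩
    apply hn
    simpa using hsup.symm

open scoped Classical in
lemma liCoeff_succ_left_zero (r : ℕ) (k : Fin (r+1) → ℤ) : liCoeff (r+1) k 0 = 0 := by
  rw [liCoeff]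
  apply Finset.sum_eq_zero
  intro m _
  rw [if_neg]
  rintro ⟨-, hpos, -⟩
  have h2 := hpos 0
  rw [Fin.lt_def] at h2
  have := (m 0).isLt
  omega

lemma stirU_div_eq (r : ℕ) : ∀ n : ℕ, n ≠ 0 →
    (stirU n (r+1) : ℚ) / n.factorial =
      (n:ℚ)⁻¹ * ∑ s ∈ Finset.range n, (stirU s r : ℚ) / s.factorial := by
  intro n
  induction n with
  | zero => intro h; exact absurd rfl h
  | succ n ih =>
    intro _
    rcases Nat.eq_zero_or_pos n with rfl | hn
    · rw [stirU_succ_succ]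
      simp
    · have hn' : n ≠ 0 := hn.ne'
      have hnq : (n:ℚ) ≠ 0 := Nat.cast_ne_zero.mpr hn'
      have hfq : ((n.factorial : ℚ)) ≠ 0 := by positivity
      rw [Finset.sum_range_succ]
      have hsum : (∑ s ∈ Finset.range n, (stirU s r : ℚ) / s.factorial)
          = (n:ℚ) * ((stirU n (r+1) : ℚ) / n.factorial) := by
        rw [ih hn']
        field_simp
      rw [hsum, stirU_succ_succ n r, Nat.factorial_succ]
      push_cast
      field_simp

lemma liCoeff_ones_eq : ∀ (r n : ℕ),
    liCoeff r (fun _ => (1:ℤ)) n = (stirU n r : ℚ) / n.factorial := by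
  intro r
  induction r with
  | zero =>
    intro n
    rw [liCoeff_zero_left, stirU_zero_right]
    rcases n with _ | n <;> simp
  | succ r ih =>
    intro n
    rcases Nat.eq_zero_or_pos n with rfl | hn
    · rw [liCoeff_succ_left_zero]
      simp
    · have hn' : n ≠ 0 := hn.ne'
      rw [liCoeff_succ r n hn', Finset.sum_congr rfl (fun s _ => ih s),
        ← stirU_div_eq r n hn']

end Aux

open PowerSeries Finset in
/-- For all integers `n ≥ r ≥ 1`, the multi-Lah number with all `r` indices equal to `1`
equals the unsigned Lah number: `L^{(1,...,1)}(n,r) = L(n,r) = C(n−1, r−1) ⬝ n!/r!`. -/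
theorem multiLah_all_ones (n r : ℕ) (hr : 1 ≤ r) (hn : r ≤ n) :
    multiLah r (fun _ => (1 : ℤ)) n =
      ((n - 1).choose (r - 1) : ℚ) * (n.factorial : ℚ) / (r.factorial : ℚ) := by
  have coeffA : ∀ j : ℕ, j ≤ n →
      coeff (R := ℚ) j (∑ m ∈ Finset.range (n + 1), liCoeff r (fun _ => (1:ℤ)) m • oneSubExpNeg ^ m) =
        if j = r then ((r.factorial : ℚ))⁻¹ else 0 := by
    intro j hj
    rw [map_sum]
    simp only [LinearMap.map_smul, smul_eq_mul, coeff_oneSubExpNeg_pow, liCoeff_ones_eq]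
    rw [← Finset.sum_subset (Finset.range_subset_range.mpr (by omega : j + 1 ≤ n + 1))
      (fun m _ hm => by
        rw [stirS_eq_zero_of_lt (by simpa using hm)]
        simp)]
    have : ∀ m ∈ Finset.range (j+1),
        (stirU m r : ℚ) / m.factorial * ((-1:ℚ)^(m+j) * m.factorial * stirS j m / j.factorial) =
          ((j.factorial : ℚ))⁻¹ * ((-1:ℚ)^(j+m) * stirS j m * stirU m r) := by
      intro m _
      have hm : ((m.factorial : ℚ)) ≠ 0 := by positivity
      rw [add_comm j m]
      field_simp
    rw [Finset.sum_congr rfl this, ← Finset.mul_sum, stir_inversion j r]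
    by_cases h : j = r
    · subst h; simp
    · simp [h]
  have hBinv : ((1 - PowerSeries.X : PowerSeries ℚ) ^ r)⁻¹ = (invOneSubPow ℚ r).val := by
    rw [eq_comm, PowerSeries.eq_inv_iff_mul_eq_one]
    · rw [← invOneSubPow_inv_eq_one_sub_pow]
      exact (invOneSubPow ℚ r).val_inv
    · rw [map_pow, map_sub, map_one, constantCoeff_X, sub_zero, one_pow]
      exact one_ne_zero
  rw [multiLah, coeff_mul]
  rw [Finset.sum_eq_single (n - r, r)]
  · rw [coeffA r (by omega)]
    rw [if_pos rfl, hBinv,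
      invOneSubPow_val_eq_mk_sub_one_add_choose_of_pos (S := ℚ) (d := r) hr, coeff_mk]
    have hpr : (n - r, r).1 = n - r := rfl
    rw [hpr, show r - 1 + (n - r) = n - 1 by omega, div_eq_mul_inv]
    ring
  · rintro ⟨a, b⟩ hab hne
    rw [Finset.HasAntidiagonal.mem_antidiagonal] at hab
    rw [coeffA b (by omega)]
    have hb : b ≠ r := by
      intro h
      exact hne (by simp [Prod.ext_iff]; omega)
    rw [if_neg hb, mul_zero]
  · intro h
    exact absurd (Finset.HasAntidiagonal.mem_antidiagonal.mpr (by omega)) h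
end

section
/- For all integers m ≥ 0 and r ≥ 1, the multi-Bernoulli number with all indices equal to 1 satisfies B_m^{(1,1,...,1)} = (1/r!) · (−1)^m · B_m^{(r)}, where there are r indices equal to 1 and B_m^{(r)} is the Bernoulli number of order r. -/
/-- Bernoulli numbers of order `r`, defined by `(t/(e^t-1))^r = Σ_{n≥0} B_n^{(r)} t^n/n!`, where
`t/(e^t-1)` is the inverse in `ℚ⟦t⟧` of the power series `(e^t-1)/t = Σ_i t^i/(i+1)!`. -/
noncomputable def bernoulliOrder (r n : ℕ) : ℚ :=
  (n.factorial : ℚ) *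
    PowerSeries.coeff (R := ℚ) n ((PowerSeries.mk fun i => (1 : ℚ) / (i + 1).factorial)⁻¹ ^ r)

open Finset PowerSeries

namespace MB

noncomputable def g (r n : ℕ) (v : Fin r → ℕ) : ℚ :=
  if StrictMono v ∧ (∀ i, 0 < v i) ∧ Finset.univ.sup v = n then (∏ i, (v i : ℚ))⁻¹ else 0

noncomputable def c (r n : ℕ) : ℚ := liCoeff r (fun _ => 1) n

lemma c_eq (r n : ℕ) : c r n = ∑ m : Fin r → Fin (n + 1), g r n (fun i => (m i : ℕ)) := by
  unfold c liCoeff g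
  refine Finset.sum_congr rfl fun m _ => ?_
  have hsm : StrictMono m ↔ StrictMono (fun i => ((m i : ℕ))) := by
    constructor
    · intro h a b hab
      exact h hab
    · intro h a b hab
      have := h hab
      exact this
  have hpos : (∀ i, 0 < m i) ↔ (∀ i, 0 < (m i : ℕ)) := by
    exact Iff.rfl
  simp only [zpow_one]
  by_cases h : StrictMono m ∧ (∀ i, 0 < m i) ∧ (Finset.univ.sup fun i => (m i : ℕ)) = n
  · rw [if_pos h, if_pos ⟨hsm.1 h.1, hpos.1 h.2.1, h.2.2⟩]
  · rw [if_neg h, if_neg (fun h' => h ⟨hsm.2 h'.1, hpos.2 h'.2.1, h'.2.2⟩)]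

lemma sum_g_ext (r n N : ℕ) (hN : n < N) :
    ∑ m : Fin r → Fin N, g r n (fun i => (m i : ℕ)) = c r n := by
  rw [c_eq]
  have key : ∀ (v : Fin r → ℕ), g r n v ≠ 0 → ∀ i, v i ≤ n := by
    intro v hv i
    by_contra hle
    apply hv
    unfold g
    rw [if_neg]
    rintro ⟨h1, h2, h3⟩
    exact hle (h3 ▸ Finset.le_sup (Finset.mem_univ i))
  set emb : (Fin r → Fin (n+1)) ↪ (Fin r → Fin N) :=
    ⟨fun m i => Fin.castLE hN (m i), fun a b hab => funext fun i => by
      have := congrFun hab i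
      exact Fin.ext (by simpa using congrArg Fin.val this)⟩ with hemb
  calc ∑ m : Fin r → Fin N, g r n (fun i => (m i : ℕ))
      = ∑ m ∈ Finset.univ.map emb, g r n (fun i => (m i : ℕ)) := by
        refine (Finset.sum_subset (Finset.subset_univ _) ?_).symm
        intro x _ hx
        by_contra hne
        have hle := key _ hne
        apply hx
        simp only [Finset.mem_map, Finset.mem_univ, true_and]
        refine ⟨fun i => ⟨(x i : ℕ), Nat.lt_succ_of_le (hle i)⟩, ?_⟩
        funext i
        exact Fin.ext rfl
    _ = ∑ m : Fin r → Fin (n+1), g r n (fun i => ((emb m) i : ℕ)) :=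
        Finset.sum_map Finset.univ emb _
    _ = ∑ m : Fin r → Fin (n+1), g r n (fun i => (m i : ℕ)) := rfl

lemma strictMono_snoc_iff {r : ℕ} (v : Fin r → ℕ) (y : ℕ) :
    StrictMono (Fin.snoc v y : Fin (r+1) → ℕ) ↔ StrictMono v ∧ ∀ i, v i < y := by
  constructor
  · intro h
    refine ⟨fun a b hab => ?_, fun i => ?_⟩
    · have := h (show (a.castSucc : Fin (r+1)) < b.castSucc by
        simpa [Fin.castSucc_lt_castSucc_iff] using hab)
      simpa using this
    · have := h (Fin.castSucc_lt_last i)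
      simpa using this
  · rintro ⟨h1, h2⟩
    rw [Fin.strictMono_iff_lt_succ]
    intro i
    rw [Fin.snoc_castSucc]
    rcases Fin.eq_castSucc_or_eq_last i.succ with ⟨j, hj⟩ | hj
    · rw [hj, Fin.snoc_castSucc]
      apply h1
      have : (j : ℕ) = (i : ℕ) + 1 := by
        have := congrArg Fin.val hj
        simpa using this.symm
      exact Fin.lt_def.2 (by omega)
    · rw [hj, Fin.snoc_last]
      exact h2 i

lemma sup_snoc {r : ℕ} (v : Fin r → ℕ) (y : ℕ) (h : ∀ i, v i ≤ y) :
    Finset.univ.sup (Fin.snoc v y : Fin (r+1) → ℕ) = y := by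
  apply le_antisymm
  · apply Finset.sup_le
    intro j _
    rcases Fin.eq_castSucc_or_eq_last j with ⟨i, hi⟩ | hi
    · rw [hi, Fin.snoc_castSucc]; exact h i
    · rw [hi, Fin.snoc_last]
  · have := Finset.le_sup (f := (Fin.snoc v y : Fin (r+1) → ℕ))
      (Finset.mem_univ (Fin.last r))
    simpa using this

lemma rec_cum (r n : ℕ) :
    ((n : ℚ) + 1) * c (r+1) (n+1) = ∑ j ∈ Finset.range (n+1), c r j := by
  rw [c_eq]
  rw [← Equiv.sum_comp (Fin.snocEquiv (fun _ => Fin (n+2)))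
    (fun m => g (r+1) (n+1) (fun i => (m i : ℕ)))]
  rw [Fintype.sum_prod_type]
  have key : ∀ (x : Fin (n+2)) (m' : Fin r → Fin (n+2)),
      g (r+1) (n+1) (fun i => ((Fin.snocEquiv (fun _ => Fin (n+2)) (x, m')) i : ℕ)) =
      if x = Fin.last (n+1) then
        (if StrictMono (fun i => ((m' i : ℕ))) ∧ (∀ i, 0 < (m' i : ℕ)) ∧ (∀ i, (m' i : ℕ) ≤ n)
          then (((n : ℚ) + 1) * ∏ i, ((m' i : ℕ) : ℚ))⁻¹ else 0)
      else 0 := by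
    intro x m'
    have hval : (fun i => ((Fin.snocEquiv (fun _ => Fin (n+2)) (x, m')) i : ℕ)) =
        (Fin.snoc (fun i => ((m' i : ℕ))) (x : ℕ) : Fin (r+1) → ℕ) := by
      funext i
      rcases Fin.eq_castSucc_or_eq_last i with ⟨j, hj⟩ | hj <;>
        simp [hj, Fin.snocEquiv, Fin.snoc_castSucc, Fin.snoc_last]
    rw [hval]
    unfold g
    set v : Fin r → ℕ := fun i => ((m' i : ℕ)) with hv
    have hprod : (∏ i, ((Fin.snoc v (x : ℕ) : Fin (r+1) → ℕ) i : ℚ)) =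
        (∏ i, (v i : ℚ)) * ((x : ℕ) : ℚ) := by
      have : ((fun t : ℕ => (t : ℚ)) ∘ (Fin.snoc v (x : ℕ) : Fin (r+1) → ℕ)) =
          (Fin.snoc (fun i => (v i : ℚ)) ((x : ℕ) : ℚ) : Fin (r+1) → ℚ) := by
        rw [Fin.comp_snoc]
        rfl
      calc (∏ i, ((Fin.snoc v (x : ℕ) : Fin (r+1) → ℕ) i : ℚ))
          = ∏ i, (Fin.snoc (fun i => (v i : ℚ)) ((x : ℕ) : ℚ) : Fin (r+1) → ℚ) i := by
            rw [← this]; rfl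
        _ = (∏ i, (v i : ℚ)) * ((x : ℕ) : ℚ) := Fin.prod_snoc _ _
    by_cases hx : x = Fin.last (n+1)
    · subst hx
      rw [if_pos rfl]
      have hxv : ((Fin.last (n+1) : Fin (n+2)) : ℕ) = n + 1 := rfl
      by_cases hc : StrictMono v ∧ (∀ i, 0 < v i) ∧ (∀ i, v i ≤ n)
      · rw [if_pos, if_pos hc]
        · rw [hprod, hxv]
          push_cast
          simp only [hv]; ring
        · refine ⟨(strictMono_snoc_iff v _).2 ⟨hc.1, fun i => by
            rw [hxv]; exact Nat.lt_succ_of_le (hc.2.2 i)⟩, ?_, ?_⟩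
          · intro i
            rcases Fin.eq_castSucc_or_eq_last i with ⟨j, hj⟩ | hj
            · rw [hj, Fin.snoc_castSucc]; exact hc.2.1 j
            · rw [hj, Fin.snoc_last, hxv]; omega
          · rw [sup_snoc, hxv]
            intro i
            rw [hxv]
            exact le_trans (hc.2.2 i) (by omega)
      · rw [if_neg, if_neg hc]
        rintro ⟨h1, h2, h3⟩
        rw [strictMono_snoc_iff] at h1
        refine hc ⟨h1.1, fun i => ?_, fun i => ?_⟩
        · have := h2 i.castSucc
          rwa [Fin.snoc_castSucc] at this
        · have hlt := h1.2 i
          rw [hxv] at hlt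
          exact Nat.lt_succ_iff.mp hlt
    · rw [if_neg hx, if_neg]
      rintro ⟨h1, h2, h3⟩
      apply hx
      rw [strictMono_snoc_iff] at h1
      have hsup : Finset.univ.sup (Fin.snoc v (x : ℕ) : Fin (r+1) → ℕ) = (x : ℕ) :=
        sup_snoc v _ (fun i => (h1.2 i).le)
    
      rw [hsup] at h3
      exact Fin.ext (by simpa using h3)
  simp only [key]
  rw [Finset.sum_eq_single (Fin.last (n+1))]
  · simp only [eq_self_iff_true, if_true]
    rw [Finset.mul_sum]
    have step2 : ∀ m' : Fin r → Fin (n+2),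
        ((n : ℚ) + 1) * (if StrictMono (fun i => ((m' i : ℕ))) ∧ (∀ i, 0 < (m' i : ℕ)) ∧
            (∀ i, (m' i : ℕ) ≤ n)
          then (((n : ℚ) + 1) * ∏ i, ((m' i : ℕ) : ℚ))⁻¹ else 0) =
        ∑ j ∈ Finset.range (n+1), g r j (fun i => (m' i : ℕ)) := by
      intro m'
      set v : Fin r → ℕ := fun i => ((m' i : ℕ)) with hv
      by_cases hc : StrictMono v ∧ (∀ i, 0 < v i)
      · by_cases hb : ∀ i, v i ≤ n
        · rw [if_pos ⟨hc.1, hc.2, hb⟩]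
          have hsup : Finset.univ.sup v ∈ Finset.range (n+1) := by
            rw [Finset.mem_range, Nat.lt_succ_iff]
            exact Finset.sup_le (fun i _ => hb i)
          have : ∀ j ∈ Finset.range (n+1), g r j v =
              if j = Finset.univ.sup v then (∏ i, (v i : ℚ))⁻¹ else 0 := by
            intro j _
            unfold g
            by_cases hj : Finset.univ.sup v = j
            · rw [if_pos ⟨hc.1, hc.2, hj⟩, if_pos hj.symm]
            · rw [if_neg (fun h => hj h.2.2), if_neg (fun h => hj h.symm)]
          rw [Finset.sum_congr rfl this, Finset.sum_ite_eq' _ _ _ |>.trans (if_pos hsup)]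
          rw [mul_inv]
          rw [← mul_assoc, mul_inv_cancel₀ (by positivity), one_mul]
        · rw [if_neg (fun h => hb h.2.2), mul_zero]
          symm
          apply Finset.sum_eq_zero
          intro j hj
          unfold g
          rw [if_neg]
          rintro ⟨h1, h2, h3⟩
          apply hb
          intro i
          have := Finset.le_sup (f := v) (Finset.mem_univ i)
          rw [h3] at this
          rw [Finset.mem_range] at hj
          omega
      · rw [if_neg (fun h => hc ⟨h.1, h.2.1⟩), mul_zero]
        symm
        apply Finset.sum_eq_zero
        intro j _
        unfold g
        rw [if_neg (fun h => hc ⟨h.1, h.2.1⟩)]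
    rw [Finset.sum_congr rfl (fun m' _ => step2 m'), Finset.sum_comm]
    exact Finset.sum_congr rfl (fun j hj => sum_g_ext r j (n+2)
      (by rw [Finset.mem_range] at hj; omega))
  · intro x _ hx
    exact Finset.sum_eq_zero fun m' _ => if_neg hx
  · intro h
    exact absurd (Finset.mem_univ _) h



lemma rec1 (r n : ℕ) :
    ((n : ℚ) + 1) * c (r+1) (n+1) = (n : ℚ) * c (r+1) n + c r n := by
  cases n with
  | zero =>
    have h := rec_cum r 0
    simpa using h
  | succ k =>
    have h1 := rec_cum r (k+1)
    have h2 := rec_cum r k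
    rw [Finset.sum_range_succ] at h1
    rw [← h2] at h1
    push_cast at h1 ⊢
    linarith

lemma c_zero_eq (n : ℕ) : c 0 n = if n = 0 then 1 else 0 := by
  rw [c_eq]
  have : (Finset.univ : Finset (Fin 0 → Fin (n+1))).card = 1 := by simp
  rw [Fintype.sum_eq_single (fun i : Fin 0 => i.elim0)
    (fun m hm => absurd (funext fun i => i.elim0) hm)]
  unfold g
  by_cases hn : n = 0
  · subst hn
    rw [if_pos, if_pos rfl]
    · simp
    · refine ⟨fun a => a.elim0, fun i => i.elim0, ?_⟩
      simp
  · rw [if_neg, if_neg hn]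
    rintro ⟨-, -, h3⟩
    apply hn
    rw [← h3]
    simp

lemma lt_of_sm_pos {r N : ℕ} (t : Fin (r+1) → Fin N) (h1 : StrictMono t)
    (h2 : ∀ i, 0 < (t i : ℕ)) (i : Fin (r+1)) : (i : ℕ) < (t i : ℕ) := by
  induction i using Fin.induction with
  | zero => simpa using h2 0
  | succ j ih =>
    have := h1 (Fin.castSucc_lt_succ (i := j))
    have h3 : (t j.castSucc : ℕ) < (t j.succ : ℕ) := this
    have h4 : ((j.castSucc : Fin (r+1)) : ℕ) = (j : ℕ) := rfl
    have h5 : ((j.succ : Fin (r+1)) : ℕ) = (j : ℕ) + 1 := rfl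
    omega

lemma c_vanish {r n : ℕ} (h : n < r) : c r n = 0 := by
  cases r with
  | zero => omega
  | succ r' =>
    unfold c liCoeff
    apply Finset.sum_eq_zero
    intro t _
    rw [if_neg]
    rintro ⟨h1, h2, h3⟩
    have hlast := lt_of_sm_pos t h1
      (fun i => h2 i) (Fin.last r')
    have hle : (t (Fin.last r') : ℕ) ≤ n :=
      (Finset.le_sup (f := fun i => ((t i : ℕ))) (Finset.mem_univ (Fin.last r'))).trans h3.le
    have : ((Fin.last r' : Fin (r'+1)) : ℕ) = r' := rfl
    omega


noncomputable def S : PowerSeries ℚ := oneSubExpNeg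

noncomputable def E : PowerSeries ℚ := PowerSeries.mk fun i => (1 : ℚ) / (i + 1).factorial

noncomputable def F : PowerSeries ℚ := PowerSeries.rescale (-1) E

lemma coeff_F (n : ℕ) : PowerSeries.coeff n F = (-1) ^ n * (1 / (n + 1).factorial) := by
  rw [F, PowerSeries.coeff_rescale, E, PowerSeries.coeff_mk]

lemma constF : PowerSeries.constantCoeff F = 1 := by
  have := coeff_F 0
  rw [PowerSeries.coeff_zero_eq_constantCoeff] at this
  simpa using this

lemma coeff_S (n : ℕ) :
    PowerSeries.coeff n S = (if n = 0 then 1 else 0) - (-1) ^ n * (1 / n.factorial) := by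
  rw [S, oneSubExpNeg, map_sub, PowerSeries.coeff_one, PowerSeries.coeff_rescale, PowerSeries.coeff_exp]
  simp

lemma S_eq : S = PowerSeries.X * F := by
  ext n
  cases n with
  | zero =>
    rw [coeff_S]
    simp [PowerSeries.coeff_zero_eq_constantCoeff]
  | succ k =>
    rw [coeff_S, PowerSeries.coeff_succ_X_mul, coeff_F]
    rw [if_neg (Nat.succ_ne_zero k)]
    rw [pow_succ]
    ring

lemma DS : (PowerSeries.derivative ℚ) S = 1 - S := by
  ext n
  rw [PowerSeries.coeff_derivative, coeff_S, map_sub, PowerSeries.coeff_one, coeff_S]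
  rw [if_neg (Nat.succ_ne_zero n)]
  have h1 : ((n+1).factorial : ℚ) = (n+1) * n.factorial := by
    rw [Nat.factorial_succ]; push_cast; ring
  have h2 : (n.factorial : ℚ) ≠ 0 := Nat.cast_ne_zero.2 (Nat.factorial_ne_zero n)
  have h3 : ((n+1).factorial : ℚ) ≠ 0 := Nat.cast_ne_zero.2 (Nat.factorial_ne_zero _)
  by_cases hn : n = 0
  · subst hn; norm_num
  · rw [if_neg hn]
    field_simp
    rw [h1, pow_succ]
    ring

lemma coeff_S_pow {N k : ℕ} (h : N < k) : PowerSeries.coeff N (S ^ k) = 0 := by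
  rw [S_eq, mul_pow, PowerSeries.coeff_X_pow_mul']
  rw [if_neg (by omega)]


noncomputable def W (r M : ℕ) : PowerSeries ℚ := ∑ m ∈ Finset.range (M+1), c r m • S ^ m

lemma Dstep (r M : ℕ) :
    (PowerSeries.derivative ℚ) (W (r+1) (M+1)) =
      W r M - ((((M:ℚ))+1) * c (r+1) (M+1)) • S ^ (M+1) := by
  set Q : PowerSeries ℚ := ∑ m ∈ Finset.range (M+1), ((m:ℚ) * c (r+1) m) • S ^ m with hQ
  have hterm : ∀ m : ℕ, (PowerSeries.derivative ℚ) (c (r+1) m • S ^ m) =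
      ((m:ℚ) * c (r+1) m) • (S ^ (m-1) * (1 - S)) := by
    intro m
    rw [Derivation.map_smul, Derivation.leibniz_pow, DS, smul_eq_mul]
    rw [smul_comm, ← Nat.cast_smul_eq_nsmul ℚ m, smul_smul]
  have hDW : (PowerSeries.derivative ℚ) (W (r+1) (M+1)) = Q * (1 - S) + W r M * (1 - S) := by
    rw [W, map_sum]
    rw [Finset.sum_congr rfl (fun m _ => hterm m)]
    rw [Finset.sum_range_succ']
    simp only [Nat.cast_zero, zero_mul, zero_smul, add_zero, Nat.add_sub_cancel]
    push_cast
    have : ∀ m ∈ Finset.range (M+1), (((m:ℕ)+1 : ℚ) * c (r+1) (m+1)) • (S ^ m * (1 - S)) =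
        ((m:ℚ) * c (r+1) m) • (S ^ m * (1 - S)) + c r m • (S ^ m * (1 - S)) := by
      intro m _
      rw [← add_smul, ← rec1]
    rw [Finset.sum_congr rfl this, Finset.sum_add_distrib]
    congr 1
    · rw [hQ, Finset.sum_mul]
      exact Finset.sum_congr rfl fun m _ => (smul_mul_assoc _ _ _).symm
    · rw [W, Finset.sum_mul]
      exact Finset.sum_congr rfl fun m _ => (smul_mul_assoc _ _ _).symm
  have hSW : S * W r M = Q * (1 - S) + (((M:ℚ)+1) * c (r+1) (M+1)) • S ^ (M+1) := by
    rw [W, Finset.mul_sum]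
    have e1 : ∀ m : ℕ, S * (c r m • S ^ m) = c r m • S ^ (m+1) := by
      intro m
      rw [mul_smul_comm, ← pow_succ']
    rw [Finset.sum_congr rfl (fun m _ => e1 m)]
    have e2 : ∀ m : ℕ, c r m • S ^ (m+1) =
        ((((m:ℚ))+1) * c (r+1) (m+1)) • S ^ (m+1) - ((m:ℚ) * c (r+1) m) • S ^ (m+1) := by
      intro m
      have hs : c r m = ((m:ℚ)+1) * c (r+1) (m+1) - (m:ℚ) * c (r+1) m := by
        linarith [rec1 r m]
      rw [← sub_smul, ← hs]
    rw [Finset.sum_congr rfl (fun m _ => e2 m), Finset.sum_sub_distrib]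
    have e3 : ∑ m ∈ Finset.range (M+1), ((((m:ℚ))+1) * c (r+1) (m+1)) • S ^ (m+1) =
        Q + (((M:ℚ)+1) * c (r+1) (M+1)) • S ^ (M+1) := by
      have hs := Finset.sum_range_succ' (fun m => ((m:ℚ) * c (r+1) m) • S ^ m) (M+1)
      simp only [Nat.cast_zero, zero_mul, zero_smul, add_zero, Nat.cast_add,
        Nat.cast_one] at hs
      rw [← hs, Finset.sum_range_succ, hQ]
      rw [show (((M+1:ℕ)):ℚ) = (M:ℚ)+1 by push_cast; ring]
    have e4 : ∑ m ∈ Finset.range (M+1), ((m:ℚ) * c (r+1) m) • S ^ (m+1) = Q * S := by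
      rw [Finset.sum_mul]
      exact Finset.sum_congr rfl fun m _ => by rw [smul_mul_assoc, ← pow_succ]
    rw [e3, e4]
    ring
  rw [hDW]
  linear_combination -hSW


lemma coeff_W : ∀ r N M : ℕ, N ≤ M →
    PowerSeries.coeff N (W r M) = if N = r then ((r.factorial : ℚ))⁻¹ else 0 := by
  intro r
  induction r with
  | zero =>
    intro N M _
    have hW : W 0 M = 1 := by
      rw [W]
      rw [Finset.sum_congr rfl (fun m (_ : m ∈ Finset.range (M+1)) => by
        rw [c_zero_eq m, ite_smul, one_smul, zero_smul])]
      rw [Finset.sum_ite_eq' (Finset.range (M+1)) 0 (fun m => S ^ m)]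
      rw [if_pos (Finset.mem_range.2 (Nat.succ_pos M))]
      exact pow_zero S
    rw [hW, PowerSeries.coeff_one]
    simp
  | succ r ih =>
    intro N
    induction N with
    | zero =>
      intro M _
      rw [if_neg (Nat.succ_ne_zero r).symm, W, map_sum]
      apply Finset.sum_eq_zero
      intro m _
      rw [map_smul, smul_eq_mul]
      cases m with
      | zero => rw [c_vanish (Nat.succ_pos r), zero_mul]
      | succ k => rw [coeff_S_pow (Nat.succ_pos k), mul_zero]
    | succ N ih2 =>
      intro M hNM
      obtain ⟨M', rfl⟩ : ∃ M', M = M' + 1 := ⟨M - 1, by omega⟩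
      have hD := congrArg (PowerSeries.coeff N) (Dstep r M')
      rw [PowerSeries.coeff_derivative, map_sub, map_smul, smul_eq_mul,
        coeff_S_pow (show N < M' + 1 by omega), mul_zero, sub_zero,
        ih N M' (by omega)] at hD
      have hne : ((N:ℚ)+1) ≠ 0 := by positivity
      by_cases h : N = r
      · subst h
        rw [if_pos rfl]
        rw [if_pos rfl] at hD
        have hfac : ((N+1).factorial : ℚ) = ((N:ℚ)+1) * (N.factorial : ℚ) := by
          rw [Nat.factorial_succ]; push_cast; ring
        rw [hfac, mul_inv]
        have hf : (N.factorial : ℚ) ≠ 0 := Nat.cast_ne_zero.2 (Nat.factorial_ne_zero N)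
        field_simp at hD ⊢
        linarith
      · rw [if_neg (fun hc => h (Nat.succ_injective hc))]
        rw [if_neg h] at hD
        rcases mul_eq_zero.1 hD with h1 | h2
        · exact h1
        · exact absurd h2 (by push_cast; exact hne)


lemma constE : PowerSeries.constantCoeff E = 1 := by
  rw [← PowerSeries.coeff_zero_eq_constantCoeff, E, PowerSeries.coeff_mk]
  simp

lemma Finv : F⁻¹ = PowerSeries.rescale (-1) (E⁻¹) := by
  rw [PowerSeries.inv_eq_iff_mul_eq_one (by rw [constF]; exact one_ne_zero)]
  rw [F, ← map_mul, PowerSeries.inv_mul_cancel E (by rw [constE]; exact one_ne_zero), map_one]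

end MB

/-- For all integers `m ≥ 0` and `r ≥ 1`, the multi-Bernoulli number with all `r` indices
equal to `1` satisfies `B_m^{(1,...,1)} = (1/r!) ⬝ (−1)^m ⬝ B_m^{(r)}`, where `B_m^{(r)}`
is the Bernoulli number of order `r`. -/
theorem multiBernoulli_all_ones (m r : ℕ) (hr : 1 ≤ r) :
    multiBernoulli r (fun _ => 1) m =
      (1 / (r.factorial : ℚ)) * (-1 : ℚ) ^ m * bernoulliOrder r m := by
  classical
  have hmB : multiBernoulli r (fun _ => 1) m = (m.factorial : ℚ) *
      PowerSeries.coeff m (∑ j ∈ Finset.range (m+1), MB.c r (j+r) • MB.S ^ j) := by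
    rw [multiBernoulli]
    congr 2
  set G : PowerSeries ℚ := ∑ j ∈ Finset.range (m+1), MB.c r (j+r) • MB.S ^ j with hG
  have hSr : MB.S ^ r = PowerSeries.X ^ r * MB.F ^ r := by
    rw [MB.S_eq, mul_pow]
  have hWG : MB.W r (m + r) = PowerSeries.X ^ r * (MB.F ^ r * G) := by
    rw [MB.W]
    have hsub : ∑ n ∈ Finset.range (m + r + 1), MB.c r n • MB.S ^ n =
        ∑ n ∈ Finset.Ico r (m + r + 1), MB.c r n • MB.S ^ n := by
      symm
      apply Finset.sum_subset
      · intro x hx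
        rw [Finset.mem_Ico] at hx
        exact Finset.mem_range.2 hx.2
      · intro x hx hnx
        rw [Finset.mem_range] at hx
        rw [Finset.mem_Ico] at hnx
        have : x < r := by omega
        rw [MB.c_vanish this, zero_smul]
    rw [hsub, Finset.sum_Ico_eq_sum_range]
    rw [show m + r + 1 - r = m + 1 by omega]
    rw [hG, Finset.mul_sum, Finset.mul_sum]
    apply Finset.sum_congr rfl
    intro j _
    rw [show r + j = j + r by omega]
    rw [pow_add, hSr, mul_smul_comm, mul_smul_comm]
    congr 1
    ring
  have hFG : ∀ n, n ≤ m → PowerSeries.coeff n (MB.F ^ r * G) =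
      if n = 0 then ((r.factorial : ℚ))⁻¹ else 0 := by
    intro n hn
    have h1 := MB.coeff_W r (n+r) (m+r) (by omega)
    rw [hWG, PowerSeries.coeff_X_pow_mul] at h1
    rw [h1]
    by_cases h : n = 0
    · subst h; simp
    · rw [if_neg (by omega), if_neg h]
  have hFinvF : (MB.F⁻¹) ^ r * MB.F ^ r = 1 := by
    rw [← mul_pow, PowerSeries.inv_mul_cancel MB.F (by rw [MB.constF]; exact one_ne_zero),
      one_pow]
  have hGeq : G = (MB.F⁻¹) ^ r * (MB.F ^ r * G) := by
    rw [← mul_assoc, hFinvF, one_mul]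
  have hcoeffG : PowerSeries.coeff m G =
      ((r.factorial : ℚ))⁻¹ * PowerSeries.coeff m ((MB.F⁻¹) ^ r) := by
    conv_lhs => rw [hGeq]
    rw [PowerSeries.coeff_mul]
    rw [Finset.sum_eq_single (m, 0)]
    · rw [hFG 0 (by omega), if_pos rfl, mul_comm]
    · rintro ⟨a, b⟩ hab hne
      rw [Finset.HasAntidiagonal.mem_antidiagonal] at hab
      have hb : b ≠ 0 := by
        rintro rfl
        apply hne
        have : a = m := by simpa using hab
        simp [this]
      rw [hFG b (by omega), if_neg hb, mul_zero]
    · intro h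
      exact absurd (Finset.HasAntidiagonal.mem_antidiagonal.2 (by omega)) h
  have hFr : PowerSeries.coeff m ((MB.F⁻¹) ^ r) =
      (-1 : ℚ)^m * PowerSeries.coeff m ((MB.E)⁻¹ ^ r) := by
    rw [MB.Finv, ← map_pow, PowerSeries.coeff_rescale]
  rw [hmB, hcoeffG, hFr, bernoulliOrder,
    show (PowerSeries.mk fun i => (1:ℚ)/(i+1).factorial) = MB.E from rfl]
  ring
end
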